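/- For nonzero polynomials g and h in two complex variables, the Newton polygon of the product g·h is the Minkowski sum of the Newton polygons of the factors: Δ_{g·h} = Δ_g + Δ_h. -/

import Mathlib

open MeasureTheory Pointwise

set_option maxHeartbeats 1000000

/-- Evaluation of a polynomial in two variables at `(z₁, z₂)`. -/
noncomputable def mvEval (f : MvPolynomial (Fin 2) ℂ) (z₁ z₂ : ℂ) : ℂ :=
  MvPolynomial.eval (fun i : Fin 2 => if i = 0 then z₁ else z₂) f

/-- The Newton polygon of `f`: the convex hull of the exponent vectors of the
monomials appearing in `f` with nonzero coefficient. -/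
noncomputable def newtonPolygon (f : MvPolynomial (Fin 2) ℂ) : Set (ℝ × ℝ) :=
  convexHull ℝ ((fun d : Fin 2 →₀ ℕ => ((d 0 : ℝ), (d 1 : ℝ))) '' (f.support : Set (Fin 2 →₀ ℕ)))

/-- An extreme point of a Minkowski sum decomposes uniquely. -/
lemma extreme_add_unique {A B : Set (ℝ × ℝ)} {p x y x' y' : ℝ × ℝ}
    (hp : p ∈ Set.extremePoints ℝ (A + B)) (hx : x ∈ A) (hy : y ∈ B)
    (hx' : x' ∈ A) (hy' : y' ∈ B) (h1 : x + y = p) (h2 : x' + y' = p) :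
    x = x' ∧ y = y' := by
  have hu : x + y' ∈ A + B := Set.add_mem_add hx hy'
  have hv : x' + y ∈ A + B := Set.add_mem_add hx' hy
  have hseg : p ∈ segment ℝ (x + y') (x' + y) := by
    refine ⟨1/2, 1/2, by norm_num, by norm_num, by norm_num, ?_⟩
    have e : (1/2 : ℝ) • (x + y') + (1/2 : ℝ) • (x' + y)
        = (1/2 : ℝ) • ((x + y) + (x' + y')) := by module
    rw [e, h1, h2]
    module
  rcases (mem_extremePoints_iff_forall_segment.1 hp).2 _ hu _ hv hseg with he | he
  · have hyy : y' = y := add_left_cancel (he.trans h1.symm)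
    have hxx : x = x' := add_right_cancel (h1.trans (hyy ▸ h2).symm)
    exact ⟨hxx, hyy.symm⟩
  · have hxx : x' = x := add_right_cancel (he.trans h1.symm)
    have hyy : y = y' := add_left_cancel (h1.trans (hxx ▸ h2).symm)
    exact ⟨hxx.symm, hyy⟩

/-- The Newton polygon of a product is the Minkowski sum of the Newton
polygons of the factors. -/
theorem newtonPolygon_mul (g h : MvPolynomial (Fin 2) ℂ) (hg : g ≠ 0) (hh : h ≠ 0) :
    newtonPolygon (g * h) = newtonPolygon g + newtonPolygon h := by
  classical
  set φ : (Fin 2 →₀ ℕ) → ℝ × ℝ := fun d => ((d 0 : ℝ), (d 1 : ℝ)) with hφ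
  have hφadd : ∀ a b : Fin 2 →₀ ℕ, φ (a + b) = φ a + φ b := by
    intro a b
    simp [hφ, Prod.ext_iff]
  have hφinj : Function.Injective φ := by
    intro a b hab
    simp only [hφ, Prod.mk.injEq, Nat.cast_inj] at hab
    ext i
    fin_cases i
    · exact hab.1
    · exact hab.2
  -- the base sets
  set Sg : Set (ℝ × ℝ) := φ '' (g.support : Set (Fin 2 →₀ ℕ)) with hSg
  set Sh : Set (ℝ × ℝ) := φ '' (h.support : Set (Fin 2 →₀ ℕ)) with hSh
  have hsum : newtonPolygon g + newtonPolygon h = convexHull ℝ (Sg + Sh) := by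
    rw [convexHull_add]; rfl
  have hfin : (Sg + Sh).Finite :=
    (((g.support : Set (Fin 2 →₀ ℕ)).toFinite.image φ).add
      (((h.support : Set (Fin 2 →₀ ℕ)).toFinite.image φ)))
  -- easy inclusion
  have easy : newtonPolygon (g * h) ⊆ newtonPolygon g + newtonPolygon h := by
    rw [hsum]
    apply convexHull_mono
    rintro _ ⟨d, hd, rfl⟩
    have hd' : d ∈ g.support + h.support := MvPolynomial.support_mul g h hd
    obtain ⟨a, ha, b, hb, rfl⟩ := Finset.mem_add.1 hd'
    exact ⟨φ a, ⟨a, ha, rfl⟩, φ b, ⟨b, hb, rfl⟩, (hφadd a b).symm⟩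
  -- extreme points of the sum are exponents of g*h
  have key : Set.extremePoints ℝ (convexHull ℝ (Sg + Sh))
      ⊆ φ '' ((g * h).support : Set (Fin 2 →₀ ℕ)) := by
    intro p hp
    have hpS : p ∈ Sg + Sh := extremePoints_convexHull_subset hp
    obtain ⟨_, ⟨a, ha, rfl⟩, _, ⟨b, hb, rfl⟩, rfl⟩ := hpS
    have hp' : φ a + φ b ∈ Set.extremePoints ℝ (newtonPolygon g + newtonPolygon h) := by
      rw [hsum]; exact hp
    have hcoeff : MvPolynomial.coeff (a + b) (g * h) ≠ 0 := by
      rw [MvPolynomial.coeff_mul]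
      rw [Finset.sum_eq_single (a, b)]
      · exact mul_ne_zero (MvPolynomial.mem_support_iff.1 ha)
          (MvPolynomial.mem_support_iff.1 hb)
      · rintro ⟨u, v⟩ huv hne
        by_contra h0
        have hu : u ∈ g.support := by
          rw [MvPolynomial.mem_support_iff]
          intro hz; exact h0 (by simp [hz])
        have hv : v ∈ h.support := by
          rw [MvPolynomial.mem_support_iff]
          intro hz; exact h0 (by simp [hz])
        have hsum' : u + v = a + b := Finset.HasAntidiagonal.mem_antidiagonal.1 huv
        have hφu : φ u ∈ newtonPolygon g := subset_convexHull ℝ _ ⟨u, hu, rfl⟩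
        have hφv : φ v ∈ newtonPolygon h := subset_convexHull ℝ _ ⟨v, hv, rfl⟩
        have hφa : φ a ∈ newtonPolygon g := subset_convexHull ℝ _ ⟨a, ha, rfl⟩
        have hφb : φ b ∈ newtonPolygon h := subset_convexHull ℝ _ ⟨b, hb, rfl⟩
        have heq : φ u + φ v = φ a + φ b := by
          rw [← hφadd, ← hφadd, hsum']
        obtain ⟨e1, e2⟩ := extreme_add_unique hp' hφu hφv hφa hφb heq rfl
        have : u = a := hφinj e1
        have : (u, v) = (a, b) := by
          refine Prod.ext this ?_
          subst this
          exact add_left_cancel hsum'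
        exact hne this
      · intro hmem
        simp [Finset.HasAntidiagonal.mem_antidiagonal] at hmem
    exact ⟨a + b, MvPolynomial.mem_support_iff.2 hcoeff, hφadd a b⟩
  refine Set.Subset.antisymm easy ?_
  have hcomp : IsCompact (convexHull ℝ (Sg + Sh)) := hfin.isCompact_convexHull ℝ
  have hKM := closure_convexHull_extremePoints hcomp (convex_convexHull ℝ _)
  have hclosed : IsClosed (newtonPolygon (g * h)) :=
    (((g * h).support : Set (Fin 2 →₀ ℕ)).toFinite.image φ).isClosed_convexHull ℝ
  calc newtonPolygon g + newtonPolygon h = convexHull ℝ (Sg + Sh) := hsum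
    _ = closure (convexHull ℝ (Set.extremePoints ℝ (convexHull ℝ (Sg + Sh)))) := hKM.symm
    _ ⊆ closure (convexHull ℝ (φ '' ((g * h).support : Set (Fin 2 →₀ ℕ)))) :=
        closure_mono (convexHull_mono key)
    _ = newtonPolygon (g * h) := hclosed.closure_eq
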